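/- Let X be a partially ordered vector space and B an order closed base of X₊. Then for every net (x_α) in X with x_α ↓ 0 there exist b ∈ B and an index α such that x_α ≤ b; consequently every upper bound of B is a net catching element. -/

import Mathlib

/-- A net decreases to `x`: antitone with infimum `x`. -/
def DecrTo {ι X : Type*} [Preorder ι] [Preorder X] (f : ι → X) (x : X) : Prop :=
  Antitone f ∧ IsGLB (Set.range f) x

/-- `M` is a net catching set for `x`. -/
def NetCatchingSetFor {X : Type*} [AddCommGroup X] [PartialOrder X] [IsOrderedAddMonoid X] (M : Set X) (x : X) : Prop :=
  ∀ (ι : Type) [Preorder ι], Nonempty ι → Directed (· ≤ ·) (id : ι → ι) →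
    ∀ f : ι → X, DecrTo f 0 → ∃ α : ι, Set.Icc (x - f α) (x + f α) ⊆ M

/-- `O` is order open. -/
def OrderOpen {X : Type*} [AddCommGroup X] [PartialOrder X] [IsOrderedAddMonoid X] (O : Set X) : Prop :=
  ∀ x ∈ O, NetCatchingSetFor O x

/-- `C` is order closed: its complement is order open. -/
def OrderClosed {X : Type*} [AddCommGroup X] [PartialOrder X] [IsOrderedAddMonoid X] (C : Set X) : Prop :=
  OrderOpen Cᶜ

/-- `y` is a net catching element. -/
def NetCatchingElem {X : Type*} [Preorder X] [Zero X] (y : X) : Prop :=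
  ∀ (ι : Type) [Preorder ι], Nonempty ι → Directed (· ≤ ·) (id : ι → ι) →
    ∀ f : ι → X, DecrTo f (0 : X) → ∃ α : ι, f α ≤ y

/-- `B` is a base of the cone `X₊`. -/
def IsBase {X : Type*} [AddCommGroup X] [PartialOrder X] [IsOrderedAddMonoid X] [Module ℝ X] (B : Set X) : Prop :=
  B.Nonempty ∧ Convex ℝ B ∧ B ⊆ {x : X | 0 ≤ x ∧ x ≠ 0} ∧
    ∀ x : X, 0 ≤ x → x ≠ 0 →
      ∃! p : ℝ × X, 0 < p.1 ∧ p.2 ∈ B ∧ x = p.1 • p.2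

/-- If `B` is an order closed base of `X₊`, then every net decreasing to `0`
eventually lies below some element of `B`; consequently every upper bound of
`B` is net catching. -/
theorem stmt9 {X : Type*} [AddCommGroup X] [PartialOrder X] [IsOrderedAddMonoid X] [Module ℝ X] [PosSMulStrictMono ℝ X] [PosSMulReflectLT ℝ X]
    (B : Set X) (hB : IsBase B) (hcl : OrderClosed B) :
    (∀ (ι : Type) [Preorder ι], Nonempty ι → Directed (· ≤ ·) (id : ι → ι) →
      ∀ f : ι → X, DecrTo f (0 : X) → ∃ b ∈ B, ∃ α : ι, f α ≤ b) ∧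
    (∀ u : X, (∀ b ∈ B, b ≤ u) → NetCatchingElem u) := by
  obtain ⟨⟨b₀, hb₀⟩, _hconv, hsub, huniq⟩ := hB
  have main : ∀ (ι : Type) [Preorder ι], Nonempty ι → Directed (· ≤ ·) (id : ι → ι) →
      ∀ f : ι → X, DecrTo f (0 : X) → ∃ b ∈ B, ∃ α : ι, f α ≤ b := by
    intro ι _ hne hdir f hf
    have h0 : (0 : X) ∈ Bᶜ := fun h => (hsub h).2 rfl
    obtain ⟨α, hα⟩ := hcl 0 h0 ι hne hdir f hf
    have hfpos : 0 ≤ f α := hf.2.1 ⟨α, rfl⟩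
    by_cases hz : f α = 0
    · exact ⟨b₀, hb₀, α, hz ▸ (hsub hb₀).1⟩
    · obtain ⟨⟨c, b⟩, ⟨hc, hbB, hx⟩, _⟩ := huniq (f α) hfpos hz
      simp only at hc hbB hx
      have hb0 : 0 ≤ b := (hsub hbB).1
      refine ⟨b, hbB, α, ?_⟩
      have hc1 : c ≤ 1 := by
        by_contra hge
        push_neg at hge
        have hmem : b ∈ Set.Icc ((0 : X) - f α) (0 + f α) := by
          constructor
          · simpa using le_trans (neg_nonpos.mpr hfpos) hb0
          · rw [zero_add, hx, ← sub_nonneg]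
            have h2 : c • b - b = (c - 1) • b := by rw [sub_smul, one_smul]
            rw [h2]
            exact smul_nonneg (by linarith) hb0
        exact hα hmem hbB
      rw [hx, ← sub_nonneg]
      have : b - c • b = (1 - c) • b := by rw [sub_smul, one_smul]
      rw [this]
      exact smul_nonneg (by linarith) hb0
  refine ⟨main, fun u hu ι _ hne hdir f hf => ?_⟩
  obtain ⟨b, hb, α, hle⟩ := main ι hne hdir f hf
  exact ⟨α, hle.trans (hu b hb)⟩
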